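/- Let Ω ⊆ ℝ^d be a domain whose boundary Γ is Ahlfors s-regular with s ∈ [d−1, d). Assume there are z ∈ Γ and R > 0 such that Ω_{z,R} = Ω ∩ B(z;R) is Ω-uniform. Then for A = Γ ∩ B(z;R/2) there exist c', R' > 0 such that |A_r| ≥ c'·r^{d−s} for all r ∈ (0,R'). -/

import Mathlib

open MeasureTheory Metric Set
open scoped ENNReal NNReal

noncomputable section

/-- Euclidean space ℝ^d. -/
abbrev Euc (d : ℕ) : Type := EuclideanSpace ℝ (Fin d)


/-- The inner `r`-neighbourhood `A_r = {x ∈ closure Ω : d_A(x) < r}`. -/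
def innNbhd (d : ℕ) (Ω A : Set (Euc d)) (r : ℝ) : Set (Euc d) :=
  {x ∈ closure Ω | infDist x A < r}

/-- The boundary set `Γ` is (locally uniformly) Ahlfors `s`-regular. -/
def AhlforsRegular (d : ℕ) (Γ : Set (Euc d)) (s : ℝ) : Prop :=
  ∃ μ : Measure (Euc d), μ.Regular ∧ μ Γᶜ = 0 ∧
    ∀ x₀ ∈ Γ, ∀ R₀ : ℝ, 0 < R₀ → ∃ c > (0 : ℝ),
      ∀ x ∈ Γ ∩ ball x₀ R₀, ∀ r : ℝ, 0 < r → r < 2 * R₀ →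
        ENNReal.ofReal (c⁻¹ * r ^ s) ≤ μ (Γ ∩ ball x₀ R₀ ∩ ball x r) ∧
        μ (Γ ∩ ball x₀ R₀ ∩ ball x r) ≤ ENNReal.ofReal (c * r ^ s)

/-- The uniformity curve condition. -/
def UniformCurve (d : ℕ) (Ω : Set (Euc d)) (σ : ℝ) (x y : Euc d) : Prop :=
  ∃ γ : ℝ → Euc d, ContinuousOn γ (Icc 0 1) ∧ γ 0 = x ∧ γ 1 = y ∧
    (∀ t ∈ Icc (0 : ℝ) 1, γ t ∈ Ω) ∧
    eVariationOn γ (Icc 0 1) ≤ ENNReal.ofReal (σ * dist x y) ∧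
    ∀ t ∈ Icc (0 : ℝ) 1,
      σ⁻¹ * min (dist x (γ t)) (dist (γ t) y) ≤ infDist (γ t) (frontier Ω)

/-- `Ω_{z,R} = Ω ∩ B(z;R)` is `Ω`-uniform (with some constant `σ ≥ 1`). -/
def OmegaUniform (d : ℕ) (Ω : Set (Euc d)) (z : Euc d) (R : ℝ) : Prop :=
  ∃ σ : ℝ, 1 ≤ σ ∧ ∀ x ∈ Ω ∩ ball z R, ∀ y ∈ Ω ∩ ball z R, UniformCurve d Ω σ x y

/-- Greedy construction of a `ρ`-separated finite subset of a set of large measure,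
assuming each `ρ`-ball carries measure at most `X`. -/
lemma greedy_sep {α : Type*} [MetricSpace α] [MeasurableSpace α] (μ : Measure α)
    (A : Set α) (ρ : ℝ) (hρ : 0 < ρ) (X : ℝ≥0∞) (hX0 : 0 < X) (hXtop : X ≠ ⊤)
    (hub : ∀ x ∈ A, μ (A ∩ ball x ρ) ≤ X) :
    ∀ n : ℕ, (n : ℝ≥0∞) * X ≤ μ A →
      ∃ F : Finset α, F.card = n ∧ ↑F ⊆ A ∧
        ∀ a ∈ F, ∀ b ∈ F, a ≠ b → ρ ≤ dist a b := by
  classical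
  intro n
  induction n with
  | zero => intro _; exact ⟨∅, by simp, by simp, by simp⟩
  | succ n ih =>
    intro hn
    have hn' : (n : ℝ≥0∞) * X ≤ μ A := by
      refine le_trans (mul_le_mul_left ?_ X) hn
      exact_mod_cast Nat.cast_le.2 (Nat.le_succ n)
    obtain ⟨F, hcard, hFA, hsep⟩ := ih hn'
    have hnotsub : ¬ A ⊆ ⋃ a ∈ F, ball a ρ := by
      intro hsub
      have h1 : μ A ≤ ∑ a ∈ F, μ (A ∩ ball a ρ) := by
        calc μ A ≤ μ (⋃ a ∈ F, A ∩ ball a ρ) := by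
              refine measure_mono fun x hx => ?_
              obtain ⟨a, haF, hxa⟩ := mem_iUnion₂.1 (hsub hx)
              exact mem_iUnion₂.2 ⟨a, haF, hx, hxa⟩
          _ ≤ ∑ a ∈ F, μ (A ∩ ball a ρ) := measure_biUnion_finset_le F _
      have h2 : ∑ a ∈ F, μ (A ∩ ball a ρ) ≤ (n : ℝ≥0∞) * X := by
        calc ∑ a ∈ F, μ (A ∩ ball a ρ) ≤ ∑ a ∈ F, X :=
              Finset.sum_le_sum fun a ha => hub a (hFA ha)
          _ = (n : ℝ≥0∞) * X := by rw [Finset.sum_const, hcard, nsmul_eq_mul]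
      have h3 : (n : ℝ≥0∞) * X < ((n + 1 : ℕ) : ℝ≥0∞) * X := by
        refine ENNReal.mul_lt_mul_left hX0.ne' hXtop ?_
        exact_mod_cast Nat.lt_succ_self n
      exact absurd ((h1.trans h2).trans_lt (h3.trans_le hn)) (lt_irrefl _)
    obtain ⟨p, hpA, hpU⟩ := not_subset.1 hnotsub
    have hpF : p ∉ F := by
      intro hpF
      exact hpU (mem_iUnion₂.2 ⟨p, hpF, mem_ball_self hρ⟩)
    refine ⟨insert p F, ?_, ?_, ?_⟩
    · rw [Finset.card_insert_of_notMem hpF, hcard]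
    · intro x hx
      rcases Finset.mem_insert.1 (by exact_mod_cast hx) with rfl | hx'
      · exact hpA
      · exact hFA hx'
    · intro a ha b hb hab
      have hdist : ∀ q ∈ F, ρ ≤ dist p q := by
        intro q hq
        by_contra h
        exact hpU (mem_iUnion₂.2 ⟨q, hq, mem_ball.2 (not_le.1 h)⟩)
      rcases Finset.mem_insert.1 ha with rfl | ha' <;>
        rcases Finset.mem_insert.1 hb with rfl | hb'
      · exact absurd rfl hab
      · exact hdist b hb'
      · rw [dist_comm]; exact hdist a ha'
      · exact hsep a ha' b hb' hab

/-- A corkscrew-type construction from the uniformity condition: near each boundary point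
`ξ` close to `z`, there is a ball of radius `(8σ)⁻¹ r` contained in `Ω ∩ B(ξ; r)`. -/
lemma corkscrew {d : ℕ} {Ω : Set (Euc d)} (hΩne : Ω ≠ univ)
    {σ : ℝ} (hσ : 1 ≤ σ) {z : Euc d} {R : ℝ}
    (hcu : ∀ x ∈ Ω ∩ ball z R, ∀ y ∈ Ω ∩ ball z R, UniformCurve d Ω σ x y)
    {y₁ y₂ : Euc d} (hy₁ : y₁ ∈ Ω ∩ ball z R) (hy₂ : y₂ ∈ Ω ∩ ball z R)
    {r : ℝ} (hr : 0 < r) (hrD : r ≤ dist y₁ y₂) (hrR : r < R)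
    {ξ : Euc d} (hξ : ξ ∈ frontier Ω ∩ ball z (R/4)) :
    ∃ w : Euc d, ball w ((8*σ)⁻¹ * r) ⊆ Ω ∩ ball ξ r := by
  have hσ0 : (0:ℝ) < σ := lt_of_lt_of_le one_pos hσ
  have hξcl : ξ ∈ closure Ω := frontier_subset_closure hξ.1
  obtain ⟨x, hxΩ, hxd⟩ := Metric.mem_closure_iff.1 hξcl (r/8) (by positivity)
  have hxz : x ∈ ball z R := by
    have h1 : dist ξ z < R/4 := mem_ball.1 hξ.2
    have h2 : dist x z ≤ dist x ξ + dist ξ z := dist_triangle _ _ _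
    rw [dist_comm] at hxd
    rw [mem_ball]
    linarith
  obtain ⟨y, hy, hxy⟩ : ∃ y, y ∈ Ω ∩ ball z R ∧ r/2 ≤ dist x y := by
    rcases le_or_gt (r/2) (dist x y₁) with h | h
    · exact ⟨y₁, hy₁, h⟩
    · refine ⟨y₂, hy₂, ?_⟩
      have h3 := dist_triangle y₁ x y₂
      rw [dist_comm y₁ x] at h3
      linarith
  obtain ⟨γ, hγc, hγ0, hγ1, hγΩ, _, hγd⟩ := hcu x ⟨hxΩ, hxz⟩ y hy
  have hgc : ContinuousOn (fun t => dist x (γ t)) (Icc (0:ℝ) 1) :=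
    (continuous_const.dist continuous_id).comp_continuousOn hγc
  have hmem : r/4 ∈ Icc (dist x (γ 0)) (dist x (γ 1)) := by
    rw [hγ0, hγ1, dist_self]
    exact ⟨by positivity, by linarith⟩
  obtain ⟨t, ht, hgt⟩ := intermediate_value_Icc (zero_le_one) hgc hmem
  simp only at hgt
  have hwΩ : γ t ∈ Ω := hγΩ t ht
  have hwy : r/4 ≤ dist (γ t) y := by
    have h3 := dist_triangle x (γ t) y
    linarith
  have hinf : σ⁻¹ * (r/4) ≤ infDist (γ t) (frontier Ω) := by
    have h1 := hγd t ht
    rw [hgt, min_eq_left hwy] at h1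
    exact h1
  obtain ⟨p, hp, hpd⟩ := exists_mem_frontier_infDist_compl_eq_dist hwΩ hΩne
  have hinf2 : σ⁻¹ * (r/4) ≤ infDist (γ t) Ωᶜ := by
    rw [hpd]
    exact hinf.trans (infDist_le_dist_of_mem hp)
  have hκσ : (8*σ)⁻¹ * r ≤ σ⁻¹ * (r/4) := by
    rw [mul_inv]
    have h6 : (0:ℝ) < σ⁻¹ := inv_pos.2 hσ0
    nlinarith
  have hκ8 : (8*σ)⁻¹ * r ≤ r/8 := by
    have h5 : (8:ℝ) ≤ 8*σ := by nlinarith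
    have h6 : (8*σ)⁻¹ ≤ (8:ℝ)⁻¹ := by
      apply inv_anti₀ (by norm_num) h5
    calc (8*σ)⁻¹*r ≤ (8:ℝ)⁻¹*r := mul_le_mul_of_nonneg_right h6 hr.le
      _ = r/8 := by ring
  refine ⟨γ t, fun u hu => ⟨?_, ?_⟩⟩
  · have hsub : ball (γ t) ((8*σ)⁻¹ * r) ⊆ Ω :=
      subset_trans (ball_subset_ball (hκσ.trans hinf2)) ball_infDist_compl_subset
    exact hsub hu
  · rw [mem_ball] at hu ⊢
    have h3 : dist u ξ ≤ dist u (γ t) + dist (γ t) x + dist x ξ := dist_triangle4 _ _ _ _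
    have h4 : dist (γ t) x = r/4 := by rw [dist_comm]; exact hgt
    rw [dist_comm] at hxd
    linarith

set_option maxHeartbeats 2000000 in
/-- Proposition 2.4: if `Γ` is Ahlfors `s`-regular with `s ∈ [d-1, d)` and `Ω_{z,R}` is
`Ω`-uniform, then `A = Γ ∩ B(z;R/2)` satisfies `|A_r| ≥ c'·r^(d-s)` for all small `r`. -/
theorem stmt_6 (d : ℕ) (Ω : Set (Euc d)) (hΩopen : IsOpen Ω) (hΩconn : IsConnected Ω)
    (s : ℝ) (hs1 : (d : ℝ) - 1 ≤ s) (hsd : s < d)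
    (hreg : AhlforsRegular d (frontier Ω) s)
    (z : Euc d) (hz : z ∈ frontier Ω) (R : ℝ) (hR : 0 < R)
    (hunif : OmegaUniform d Ω z R) :
    ∃ c' > (0 : ℝ), ∃ R' > (0 : ℝ), ∀ r : ℝ, 0 < r → r < R' →
      ENNReal.ofReal (c' * r ^ ((d : ℝ) - s)) ≤
        volume (innNbhd d Ω (frontier Ω ∩ ball z (R / 2)) r) := by
  classical
  rcases Nat.eq_zero_or_pos d with rfl | hd
  · exfalso
    haveI : Subsingleton (Euc 0) := ⟨fun a b => (WithLp.ext_iff _).2 (funext fun i => Fin.elim0 i)⟩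
    obtain ⟨y, hy⟩ := hΩconn.nonempty
    have hU : Ω = univ := eq_univ_of_forall fun x => by rwa [Subsingleton.elim x y]
    rw [hU, frontier_univ] at hz
    exact hz
  obtain ⟨μ, hμreg, hμnull, hμ⟩ := hreg
  obtain ⟨σ, hσ, hcurve⟩ := hunif
  have hσ0 : (0:ℝ) < σ := lt_of_lt_of_le one_pos hσ
  have hΩne : Ω ≠ univ := by
    intro h
    rw [h, frontier_univ] at hz
    exact hz
  -- two points in Ω ∩ ball z R at definite distance
  have hzcl : z ∈ closure Ω := frontier_subset_closure hz
  obtain ⟨y₁, hy₁Ω, hy₁d⟩ := Metric.mem_closure_iff.1 hzcl R hR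
  have hy₁ : y₁ ∈ Ω ∩ ball z R := ⟨hy₁Ω, by rwa [mem_ball, dist_comm]⟩
  obtain ⟨ε, hε, hεball⟩ := Metric.isOpen_iff.1 (hΩopen.inter isOpen_ball) y₁ hy₁
  set u : Euc d := EuclideanSpace.single (⟨0, hd⟩ : Fin d) (1:ℝ) with hu
  have hun : ‖u‖ = 1 := by rw [hu, EuclideanSpace.norm_single]; norm_num
  set y₂ : Euc d := y₁ + (ε/2) • u with hy₂def
  have hDist : dist y₁ y₂ = ε/2 := by
    have h7 : y₂ - y₁ = (ε/2) • u := by rw [hy₂def]; abel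
    rw [dist_comm, dist_eq_norm, h7, norm_smul, hun, mul_one, Real.norm_eq_abs,
      abs_of_pos (by positivity)]
  have hy₂ : y₂ ∈ Ω ∩ ball z R := by
    apply hεball
    rw [mem_ball, dist_comm, hDist]
    linarith
  -- Ahlfors regularity at z with radius R/4
  obtain ⟨c, hc, hAhl⟩ := hμ z hz (R/4) (by positivity)
  set A'' : Set (Euc d) := frontier Ω ∩ ball z (R/4) with hA''
  have hzA'' : z ∈ A'' := ⟨hz, mem_ball_self (by positivity)⟩
  have hAhlz := hAhl z ⟨hz, mem_ball_self (by positivity)⟩ (R/4) (by positivity) (by linarith)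
  have hAint : A'' ∩ ball z (R/4) = A'' := inter_eq_self_of_subset_left inter_subset_right
  have hlow : ENNReal.ofReal (c⁻¹ * (R/4) ^ s) ≤ μ A'' := by
    have h := hAhlz.1
    rwa [hAint] at h
  have hup : μ A'' ≤ ENNReal.ofReal (c * (R/4) ^ s) := by
    have h := hAhlz.2
    rwa [hAint] at h
  have hμfin : μ A'' ≠ ⊤ := (hup.trans_lt ENNReal.ofReal_lt_top).ne
  set μ₀ := (μ A'').toReal with hμ₀def
  have hμ₀pos : 0 < μ₀ := by
    have h1 : (0:ℝ≥0∞) < μ A'' := lt_of_lt_of_le (by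
      rw [ENNReal.ofReal_pos]
      positivity) hlow
    exact ENNReal.toReal_pos h1.ne' hμfin
  set κ := (8*σ)⁻¹ with hκ
  have hκ0 : 0 < κ := by positivity
  set v := volume (ball (0 : Euc d) 1) with hv
  have hv0 : 0 < v := measure_ball_pos _ _ one_pos
  have hvtop : v ≠ ⊤ := measure_ball_lt_top.ne
  set v₀ := v.toReal with hv₀def
  have hv₀pos : 0 < v₀ := ENNReal.toReal_pos hv0.ne' hvtop
  have h5s : (0:ℝ) < (5:ℝ) ^ s := Real.rpow_pos_of_pos (by norm_num) s
  refine ⟨μ₀ * κ ^ d * v₀ / (2 * c * 5 ^ s), by positivity, min (R/10) (ε/2), by positivity, ?_⟩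
  intro r hr hrR'
  have hrR10 : r < R/10 := lt_of_lt_of_le hrR' (min_le_left _ _)
  have hrD : r ≤ dist y₁ y₂ := by
    rw [hDist]
    exact le_of_lt (lt_of_lt_of_le hrR' (min_le_right _ _))
  have hrR : r < R := by linarith
  have hrs : (0:ℝ) < r ^ s := Real.rpow_pos_of_pos hr s
  -- upper bound for balls of radius 5r
  set X := ENNReal.ofReal (c * (5*r) ^ s) with hX
  have h5rs : (0:ℝ) < (5*r) ^ s := Real.rpow_pos_of_pos (by linarith) s
  have hX0 : 0 < X := by rw [hX, ENNReal.ofReal_pos]; positivity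
  have hXtop : X ≠ ⊤ := ENNReal.ofReal_ne_top
  have hub : ∀ x ∈ A'', μ (A'' ∩ ball x (5*r)) ≤ X := by
    intro x hx
    exact (hAhl x hx (5*r) (by linarith) (by linarith)).2
  -- the count
  set m := μ₀ / (c * (5*r) ^ s) with hm
  have hm0 : 0 < m := by positivity
  obtain ⟨F, hFA, hsep, hcount⟩ :
      ∃ F : Finset (Euc d), ↑F ⊆ A'' ∧
        (∀ a ∈ F, ∀ b ∈ F, a ≠ b → 5*r ≤ dist a b) ∧ m/2 ≤ (F.card : ℝ) := by
    rcases lt_or_ge m 1 with hm1 | hm1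
    · refine ⟨{z}, by simpa using hzA'', by simp, ?_⟩
      simp only [Finset.card_singleton, Nat.cast_one]
      linarith
    · set n := ⌊m⌋₊ with hn
      have hnm : (n : ℝ) ≤ m := Nat.floor_le hm0.le
      have hgrow : ((n : ℝ≥0∞)) * X ≤ μ A'' := by
        have h1 : (n:ℝ) * (c * (5*r) ^ s) ≤ μ₀ := by
          rw [hm] at hnm
          calc (n:ℝ) * (c * (5*r) ^ s) ≤ (μ₀ / (c * (5*r)^s)) * (c * (5*r) ^ s) := by
                apply mul_le_mul_of_nonneg_right hnm
                positivity
            _ = μ₀ := by field_simp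
        calc ((n : ℝ≥0∞)) * X = ENNReal.ofReal ((n:ℝ)) * ENNReal.ofReal (c * (5*r) ^ s) := by
              rw [ENNReal.ofReal_natCast]
          _ = ENNReal.ofReal ((n:ℝ) * (c * (5*r) ^ s)) :=
              (ENNReal.ofReal_mul (by positivity)).symm
          _ ≤ ENNReal.ofReal μ₀ := ENNReal.ofReal_le_ofReal h1
          _ = μ A'' := ENNReal.ofReal_toReal hμfin
      obtain ⟨F, hcard, hFA, hsep⟩ := greedy_sep μ A'' (5*r) (by linarith) X hX0 hXtop hub n hgrow
      refine ⟨F, hFA, hsep, ?_⟩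
      rw [hcard]
      rcases le_or_gt 2 m with h2 | h2
      · have := Nat.sub_one_lt_floor m
        rw [← hn] at this
        linarith
      · have h3 : 1 ≤ n := Nat.le_floor (by exact_mod_cast hm1)
        have h4 : (1:ℝ) ≤ (n:ℝ) := by exact_mod_cast h3
        linarith
  -- corkscrew balls
  have hcork : ∀ ξ ∈ A'', ∃ w : Euc d, ball w (κ * r) ⊆ Ω ∩ ball ξ r := by
    intro ξ hξ
    exact corkscrew hΩne hσ hcurve hy₁ hy₂ hr hrD hrR (by rwa [hA''] at hξ)
  set w : Euc d → Euc d := fun ξ => if h : ξ ∈ A'' then (hcork ξ h).choose else ξ with hwdef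
  have hwball : ∀ ξ ∈ A'', ball (w ξ) (κ * r) ⊆ Ω ∩ ball ξ r := by
    intro ξ hξ
    rw [hwdef]
    simp only [dif_pos hξ]
    exact (hcork ξ hξ).choose_spec
  have hwmem : ∀ ξ ∈ A'', w ξ ∈ ball ξ r := by
    intro ξ hξ
    exact ((hwball ξ hξ) (mem_ball_self (by positivity))).2
  -- disjointness
  have hdisj : (↑F : Set (Euc d)).PairwiseDisjoint (fun ξ => ball (w ξ) (κ * r)) := by
    intro a ha b hb hab
    have h1 : 5*r ≤ dist a b := hsep a (by exact_mod_cast ha) b (by exact_mod_cast hb) hab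
    have h2 : dist (w a) a < r := mem_ball.1 (hwmem a (hFA ha))
    have h3 : dist (w b) b < r := mem_ball.1 (hwmem b (hFA hb))
    have h4 : dist a b ≤ dist a (w a) + dist (w a) (w b) + dist (w b) b := dist_triangle4 _ _ _ _
    rw [dist_comm a (w a)] at h4
    have h5 : κ * r + κ * r ≤ dist (w a) (w b) := by
      have hκ8 : κ ≤ 1/8 := by
        have h88 : (8:ℝ) ≤ 8*σ := by nlinarith
        calc κ ≤ (8:ℝ)⁻¹ := inv_anti₀ (by norm_num) h88
          _ = 1/8 := by norm_num
      nlinarith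
    exact ball_disjoint_ball h5
  -- the union of corkscrew balls sits inside the inner neighbourhood
  have hsub : (⋃ ξ ∈ F, ball (w ξ) (κ * r)) ⊆ innNbhd d Ω (frontier Ω ∩ ball z (R / 2)) r := by
    intro x hx
    obtain ⟨ξ, hξF, hxξ⟩ := mem_iUnion₂.1 hx
    have hξA : ξ ∈ A'' := hFA hξF
    have h1 := (hwball ξ hξA) hxξ
    have hξA2 : ξ ∈ frontier Ω ∩ ball z (R/2) := by
      refine ⟨hξA.1, ?_⟩
      have := mem_ball.1 hξA.2
      rw [mem_ball]
      linarith
    refine ⟨subset_closure h1.1, ?_⟩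
    calc infDist x (frontier Ω ∩ ball z (R/2)) ≤ dist x ξ := infDist_le_dist_of_mem hξA2
      _ < r := mem_ball.1 h1.2
  -- volume computation
  have hvol : (F.card : ℝ≥0∞) * (ENNReal.ofReal ((κ*r) ^ d) * v) ≤
      volume (innNbhd d Ω (frontier Ω ∩ ball z (R / 2)) r) := by
    have h1 : volume (⋃ ξ ∈ F, ball (w ξ) (κ * r)) = ∑ ξ ∈ F, volume (ball (w ξ) (κ * r)) :=
      measure_biUnion_finset hdisj (fun b _ => measurableSet_ball)
    have h2 : ∀ ξ ∈ F, volume (ball (w ξ) (κ * r)) = ENNReal.ofReal ((κ*r) ^ d) * v := by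
      intro ξ _
      rw [Measure.addHaar_ball_of_pos volume (w ξ) (by positivity)]
      rw [finrank_euclideanSpace_fin]
    calc (F.card : ℝ≥0∞) * (ENNReal.ofReal ((κ*r) ^ d) * v)
        = ∑ ξ ∈ F, volume (ball (w ξ) (κ * r)) := by
          rw [Finset.sum_congr rfl h2, Finset.sum_const, nsmul_eq_mul]
      _ = volume (⋃ ξ ∈ F, ball (w ξ) (κ * r)) := h1.symm
      _ ≤ _ := measure_mono hsub
  -- final real computation
  refine le_trans ?_ hvol
  have heq : μ₀ * κ ^ d * v₀ / (2 * c * 5 ^ s) * r ^ ((d : ℝ) - s)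
      = (m/2) * ((κ*r) ^ d * v₀) := by
    rw [Real.rpow_sub hr, Real.rpow_natCast, hm, Real.mul_rpow (by norm_num) hr.le, mul_pow]
    field_simp
  have hle : μ₀ * κ ^ d * v₀ / (2 * c * 5 ^ s) * r ^ ((d : ℝ) - s)
      ≤ (F.card : ℝ) * ((κ*r) ^ d * v₀) := by
    rw [heq]
    apply mul_le_mul_of_nonneg_right hcount (by positivity)
  calc ENNReal.ofReal (μ₀ * κ ^ d * v₀ / (2 * c * 5 ^ s) * r ^ ((d : ℝ) - s))
      ≤ ENNReal.ofReal ((F.card : ℝ) * ((κ*r) ^ d * v₀)) := ENNReal.ofReal_le_ofReal hle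
    _ = (F.card : ℝ≥0∞) * (ENNReal.ofReal ((κ*r) ^ d) * v) := by
        rw [ENNReal.ofReal_mul (by positivity), ENNReal.ofReal_natCast,
          ENNReal.ofReal_mul (by positivity), hv₀def, ENNReal.ofReal_toReal hvtop]
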